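/- Let (g_ι)_{ι<α} be a non-empty Cauchy sequence (indexed by an ordinal α) of total canonical term graphs in the metric space of total canonical term graphs with the rigid distance d†. Then (g_ι)_{ι<α} converges in this metric space and its limit equals its limit inferior liminf_{ι→α} g_ι computed in the complete semilattice of canonical partial term graphs ordered by ≤⊥r. -/

import Mathlib

set_option autoImplicit false

namespace TGR

/-- A signature: a type of symbols, each with a finite arity. -/
structure Signature where
  Sym : Type
  ar : Sym → ℕ

/-- The signature `Σ_⊥`: `Σ` extended by a fresh nullary symbol `⊥` (here `none`). -/
def Signature.bot (S : Signature) : Signature where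
  Sym := Option S.Sym
  ar := fun o => match o with
    | none => 0
    | some f => S.ar f

/-- A rooted graph over a signature `S` with nodes `N`: a labelling, a successor
function respecting arities, and a root node. -/
structure TermGraph (S : Signature) (N : Type) where
  lab : N → S.Sym
  suc : (n : N) → Fin (S.ar (lab n)) → N
  root : N

namespace TermGraph

variable {S : Signature} {N M K : Type}

/-- `g.IsPos π n`: `π` is a position (path of successor indices from the root) of node `n`. -/
inductive IsPos (g : TermGraph S N) : List ℕ → N → Prop
  | root : IsPos g [] g.root
  | step {π : List ℕ} {n : N} (h : IsPos g π n) (i : Fin (S.ar (g.lab n))) :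
      IsPos g (π ++ [(i : ℕ)]) (g.suc n i)

/-- All nodes are reachable from the root. -/
def Reachable (g : TermGraph S N) : Prop :=
  ∀ n : N, ∃ π : List ℕ, g.IsPos π n

/-- The set of positions of `g`. -/
def pos (g : TermGraph S N) : Set (List ℕ) :=
  {π | ∃ n : N, g.IsPos π n}

/-- The set of positions of node `n` in `g`. -/
def nodePos (g : TermGraph S N) (n : N) : Set (List ℕ) :=
  {π | g.IsPos π n}

/-- `π ∼_g π'`: `π` and `π'` are positions of the same node. -/
def Aliases (g : TermGraph S N) (π π' : List ℕ) : Prop :=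
  ∃ n : N, g.IsPos π n ∧ g.IsPos π' n

/-- A position is acyclic if it passes no node twice. -/
def IsAcyclicPos (g : TermGraph S N) (π : List ℕ) : Prop :=
  ∀ (π₁ π₂ : List ℕ) (n : N), π₁ <+: π₂ → π₂ <+: π →
    g.IsPos π₁ n → g.IsPos π₂ n → π₁ = π₂

/-- The set of acyclic positions of node `n` in `g`. -/
def nodePosAcy (g : TermGraph S N) (n : N) : Set (List ℕ) :=
  {π | g.IsPos π n ∧ g.IsAcyclicPos π}

/-- The set of acyclic positions of `g`. -/
def posAcy (g : TermGraph S N) : Set (List ℕ) :=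
  {π | (∃ n : N, g.IsPos π n) ∧ g.IsAcyclicPos π}

/-- The depth of a node: the minimal length of its positions. -/
noncomputable def depth (g : TermGraph S N) (n : N) : ℕ :=
  sInf {k : ℕ | ∃ π : List ℕ, g.IsPos π n ∧ π.length = k}

open Classical in
/-- The (unique) node at a position. -/
noncomputable def nodeAt (g : TermGraph S N) (π : List ℕ) : N :=
  if h : ∃ n : N, g.IsPos π n then h.choose else g.root

/-- The label `g(π)` at a position. -/
noncomputable def labAt (g : TermGraph S N) (π : List ℕ) : S.Sym :=
  g.lab (g.nodeAt π)

/-- `Δ`-homomorphism: root, labelling and successor conditions, the latter two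
suspended on `Δ`-labelled nodes. -/
structure IsDHom (Δ : Set S.Sym) (g : TermGraph S N) (h : TermGraph S M)
    (φ : N → M) : Prop where
  root_eq : φ g.root = h.root
  lab_eq : ∀ n : N, g.lab n ∉ Δ → h.lab (φ n) = g.lab n
  suc_eq : ∀ n : N, g.lab n ∉ Δ → ∀ (i : ℕ) (hi : i < S.ar (g.lab n))
      (hi' : i < S.ar (h.lab (φ n))),
      φ (g.suc n ⟨i, hi⟩) = h.suc (φ n) ⟨i, hi'⟩

/-- Rigidity: `Pa_g(n) = Pa_h(φ n)` for all non-`Δ`-labelled nodes `n`. -/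
def IsRigid (Δ : Set S.Sym) (g : TermGraph S N) (h : TermGraph S M)
    (φ : N → M) : Prop :=
  ∀ n : N, g.lab n ∉ Δ → g.nodePosAcy n = h.nodePosAcy (φ n)

/-- Rigid `Δ`-homomorphism. -/
def IsRigidDHom (Δ : Set S.Sym) (g : TermGraph S N) (h : TermGraph S M)
    (φ : N → M) : Prop :=
  IsDHom Δ g h φ ∧ IsRigid Δ g h φ

/-- Isomorphism of term graphs: a homomorphism with an inverse homomorphism. -/
def Iso (g : TermGraph S N) (h : TermGraph S M) : Prop :=
  ∃ (φ : N → M) (ψ : M → N), IsDHom ∅ g h φ ∧ IsDHom ∅ h g ψ ∧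
    (∀ n : N, ψ (φ n) = n) ∧ (∀ m : M, φ (ψ m) = m)

/-- A partial term graph (over `Σ_⊥`) is total if no node is labelled `⊥`. -/
def Total (g : TermGraph S.bot N) : Prop := ∀ n : N, g.lab n ≠ none

/-- Rigid `⊥`-homomorphism between partial term graphs. -/
def IsRigidBotHom (g : TermGraph S.bot N) (h : TermGraph S.bot M)
    (φ : N → M) : Prop :=
  IsRigidDHom ({none} : Set (Option S.Sym)) g h φ

/-- The `⊥`-depth of a partial term graph: the minimal depth of a `⊥`-labelled
node, `ω` (`⊤`) if there is none. -/
noncomputable def botDepth (g : TermGraph S.bot N) : ℕ∞ :=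
  sInf {d : ℕ∞ | ∃ n : N, g.lab n = none ∧ (g.depth n : ℕ∞) = d}

/-- `m` is an acyclic predecessor of `n`: some acyclic position `π ++ [i]` of `n`
has `π` a position of `m`. -/
def acyPred (g : TermGraph S N) (n : N) : Set N :=
  {m | ∃ (π : List ℕ) (i : ℕ), (π ++ [i]) ∈ g.nodePosAcy n ∧ g.IsPos π m}

/-- Retained nodes of the truncation at depth `d`: the least set of nodes
containing all nodes of depth `< d` and closed under acyclic predecessors. -/
inductive Retained (g : TermGraph S N) (d : ℕ) : N → Prop
  | shallow {n : N} : g.depth n < d → Retained g d n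
  | pred {n m : N} : Retained g d n → m ∈ g.acyPred n → Retained g d m

theorem not_retained_zero {g : TermGraph S N} (n : N) : ¬ g.Retained 0 n := by
  intro h
  induction h with
  | shallow hd => exact Nat.not_lt_zero _ hd
  | pred _ _ ih => exact ih

/-- Fringe nodes of the truncation at depth `d` (a pair `(n, i)` stands for the
fresh node `n^i`); at depth `0` the fringe is just (a copy of) the root. -/
def IsFringe (g : TermGraph S.bot N) (d : ℕ) (p : N × ℕ) : Prop :=
  if d = 0 then p = (g.root, 0)
  else g.Retained d p.1 ∧ ∃ h : p.2 < S.bot.ar (g.lab p.1),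
    (¬ g.Retained d (g.suc p.1 ⟨p.2, h⟩) ∨
      (d - 1 ≤ g.depth p.1 ∧ p.1 ∉ g.acyPred (g.suc p.1 ⟨p.2, h⟩)))

/-- The node set of the rigid truncation: retained nodes plus fringe nodes. -/
def TNode (g : TermGraph S.bot N) (d : ℕ) : Type :=
  {x : N ⊕ (N × ℕ) // Sum.elim (g.Retained d) (g.IsFringe d) x}

def truncLab (g : TermGraph S.bot N) (d : ℕ) (x : TNode g d) : S.bot.Sym :=
  Sum.elim (fun n => g.lab n) (fun _ => none) x.1

open Classical in
noncomputable def truncSuc (g : TermGraph S.bot N) (d : ℕ) :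
    (x : TNode g d) → Fin (S.bot.ar (truncLab g d x)) → TNode g d
  | ⟨Sum.inl n, hn⟩ => fun i =>
      if hf : g.IsFringe d (n, (i : ℕ)) then ⟨Sum.inr (n, (i : ℕ)), hf⟩
      else
        ⟨Sum.inl (g.suc n ⟨(i : ℕ), i.isLt⟩), by
          show g.Retained d (g.suc n ⟨(i : ℕ), i.isLt⟩)
          rcases Nat.eq_zero_or_pos d with hd | hd
          · subst hd
            exact ((not_retained_zero n) hn).elim
          · by_contra hc
            apply hf
            show g.IsFringe d (n, (i : ℕ))
            unfold IsFringe
            rw [if_neg (Nat.pos_iff_ne_zero.mp hd)]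
            exact ⟨hn, i.isLt, Or.inl hc⟩⟩
  | ⟨Sum.inr p, hp⟩ => fun i => absurd i.isLt (Nat.not_lt_zero _)

noncomputable def truncRoot (g : TermGraph S.bot N) (d : ℕ) : TNode g d :=
  if hd : d = 0 then
    ⟨Sum.inr (g.root, 0), by
      subst hd
      show g.IsFringe 0 (g.root, 0)
      simp [IsFringe]⟩
  else
    ⟨Sum.inl g.root, by
      show g.Retained d g.root
      exact Retained.shallow (lt_of_le_of_lt
        (Nat.sInf_le ⟨[], IsPos.root, rfl⟩) (Nat.pos_of_ne_zero hd))⟩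

/-- The rigid truncation `g†d` of a partial term graph at finite depth `d`. -/
noncomputable def trunc (g : TermGraph S.bot N) (d : ℕ) :
    TermGraph S.bot (TNode g d) where
  lab := truncLab g d
  suc := truncSuc g d
  root := truncRoot g d

end TermGraph

/-- A canonical term graph: a term graph whose nodes are sets of positions,
each node being exactly its set of positions, with all nodes reachable. -/
structure CTG (S : Signature) where
  nodes : Set (Set (List ℕ))
  tg : TermGraph S ↥nodes
  reach : tg.Reachable
  canon : ∀ n : ↥nodes, (n : Set (List ℕ)) = tg.nodePos n

namespace CTG

variable {S : Signature}

def pos (g : CTG S) : Set (List ℕ) := g.tg.pos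
def Aliases (g : CTG S) : List ℕ → List ℕ → Prop := g.tg.Aliases
def posAcy (g : CTG S) : Set (List ℕ) := g.tg.posAcy
noncomputable def labAt (g : CTG S) : List ℕ → S.Sym := g.tg.labAt

/-- A canonical partial term graph is total if it has no `⊥`-labelled node. -/
def Total (g : CTG S.bot) : Prop := g.tg.Total

/-- The rigid partial order `g ≤⊥r h`: there is a rigid `⊥`-homomorphism
from `g` to `h`. -/
def LeR (g h : CTG S.bot) : Prop :=
  ∃ φ, TermGraph.IsRigidBotHom g.tg h.tg φ

noncomputable def botDepth (g : CTG S.bot) : ℕ∞ := g.tg.botDepth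

/-- `TruncIso g h d`: the rigid truncations of `g` and `h` at depth `d ≤ ω`
are isomorphic (`g†ω = g`). -/
def TruncIso {N M : Type} (g : TermGraph S.bot N) (h : TermGraph S.bot M)
    (d : ℕ∞) : Prop :=
  (d = ⊤ → TermGraph.Iso g h) ∧
  ∀ k : ℕ, d = (k : ℕ∞) → TermGraph.Iso (g.trunc k) (h.trunc k)

/-- The rigid similarity `sim†(g,h)`: the maximal `d ≤ ω` such that
`g†d ≅ h†d`. -/
noncomputable def simr (g h : CTG S.bot) : ℕ∞ :=
  sSup {d : ℕ∞ | TruncIso g.tg h.tg d}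

open Classical in
/-- The rigid distance `d†(g,h) = 2^{-sim†(g,h)}` (with `2^{-ω} = 0`). -/
noncomputable def rdist (g h : CTG S.bot) : ℝ :=
  if simr g h = ⊤ then 0 else (1 / 2 : ℝ) ^ (simr g h).toNat

def IsUB (A : Set (CTG S.bot)) (u : CTG S.bot) : Prop := ∀ g ∈ A, LeR g u

def IsLubR (A : Set (CTG S.bot)) (u : CTG S.bot) : Prop :=
  IsUB A u ∧ ∀ v, IsUB A v → LeR u v

def IsLB (A : Set (CTG S.bot)) (l : CTG S.bot) : Prop := ∀ g ∈ A, LeR l g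

def IsGlbR (A : Set (CTG S.bot)) (l : CTG S.bot) : Prop :=
  IsLB A l ∧ ∀ m, IsLB A m → LeR m l

/-- A directed set: non-empty and every two elements have an upper bound inside. -/
def DirectedR (A : Set (CTG S.bot)) : Prop :=
  A.Nonempty ∧ ∀ g ∈ A, ∀ h ∈ A, ∃ u ∈ A, LeR g u ∧ LeR h u

/-- `L` is the limit inferior `⨆_{β<α} ⨅_{β≤ι<α} f ι` of the ordinal-indexed
sequence `(f ι)_{ι<α}` in the rigid partial order. -/
def IsLiminfR (α : Ordinal.{0}) (f : Ordinal.{0} → CTG S.bot) (L : CTG S.bot) : Prop :=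
  ∃ inf : Ordinal.{0} → CTG S.bot,
    (∀ β < α, IsGlbR {g | ∃ ι, β ≤ ι ∧ ι < α ∧ g = f ι} (inf β)) ∧
    IsLubR {g | ∃ β < α, g = inf β} L

/-- Cauchy condition for an ordinal-indexed sequence w.r.t. the rigid distance. -/
def OrdCauchy (α : Ordinal.{0}) (f : Ordinal.{0} → CTG S.bot) : Prop :=
  ∀ ε : ℝ, 0 < ε → ∃ β < α, ∀ ι ι' : Ordinal.{0},
    β < ι → ι < ι' → ι' < α → rdist (f ι) (f ι') < ε

/-- Convergence of an ordinal-indexed sequence to `g` w.r.t. the rigid distance. -/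
def OrdTendsto (α : Ordinal.{0}) (f : Ordinal.{0} → CTG S.bot) (g : CTG S.bot) : Prop :=
  ∀ ε : ℝ, 0 < ε → ∃ β < α, ∀ ι : Ordinal.{0}, β < ι → ι < α → rdist (f ι) g < ε

/-- `u` is the unravelling of `g`: the term tree with the same positions and
labels as `g` and trivial aliasing. -/
def IsUnravelling (g u : CTG S) : Prop :=
  u.pos = g.pos ∧ (∀ π ∈ g.pos, u.labAt π = g.labAt π) ∧
  (∀ π π' : List ℕ, u.Aliases π π' ↔ (π ∈ g.pos ∧ π = π'))

end CTG

/-- A labelled quotient tree over a signature `S`. -/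
structure LQT (S : Signature) where
  P : Set (List ℕ)
  nonempty : P.Nonempty
  l : List ℕ → S.Sym
  rel : List ℕ → List ℕ → Prop
  rel_refl : ∀ π ∈ P, rel π π
  rel_symm : ∀ π π' : List ℕ, rel π π' → rel π' π
  rel_trans : ∀ π π' π'' : List ℕ, rel π π' → rel π' π'' → rel π π''
  rel_mem : ∀ π π' : List ℕ, rel π π' → π ∈ P ∧ π' ∈ P
  reach_mem : ∀ (π : List ℕ) (i : ℕ), π ++ [i] ∈ P → π ∈ P
  reach_ar : ∀ (π : List ℕ) (i : ℕ), π ++ [i] ∈ P → i < S.ar (l π)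
  congr_lab : ∀ π π' : List ℕ, rel π π' → l π = l π'
  congr_suc : ∀ (π π' : List ℕ) (i : ℕ), rel π π' → i < S.ar (l π) →
    rel (π ++ [i]) (π' ++ [i])

end TGR

namespace TGR
namespace TermGraph

variable {S : Signature} {N M K : Type}

/-! ### Basic position lemmas -/

theorem isPos_cases {g : TermGraph S N} {π : List ℕ} {n : N} (h : g.IsPos π n) :
    (π = [] ∧ n = g.root) ∨
      ∃ (π' : List ℕ) (m : N) (i : Fin (S.ar (g.lab m))),
        π = π' ++ [(i : ℕ)] ∧ g.IsPos π' m ∧ n = g.suc m i := by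
  cases h with
  | root => exact Or.inl ⟨rfl, rfl⟩
  | step h i => exact Or.inr ⟨_, _, i, rfl, h, rfl⟩

theorem isPos_nil {g : TermGraph S N} {n : N} (h : g.IsPos [] n) : n = g.root := by
  rcases isPos_cases h with ⟨_, rfl⟩ | ⟨π', m, i, he, _, _⟩
  · rfl
  · exact absurd he.symm (by simp)

theorem isPos_snoc {g : TermGraph S N} {π : List ℕ} {i : ℕ} {m : N}
    (h : g.IsPos (π ++ [i]) m) :
    ∃ (n : N) (hi : i < S.ar (g.lab n)), g.IsPos π n ∧ m = g.suc n ⟨i, hi⟩ := by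
  rcases isPos_cases h with ⟨he, _⟩ | ⟨π', n, j, he, hp, hm⟩
  · exact absurd he (by simp)
  · obtain ⟨h1, h2⟩ := List.append_inj' he rfl
    obtain rfl : i = (j : ℕ) := by simpa using h2
    exact ⟨n, j.isLt, h1 ▸ hp, hm⟩

theorem isPos_unique {g : TermGraph S N} {π : List ℕ} :
    ∀ {n m : N}, g.IsPos π n → g.IsPos π m → n = m := by
  induction π using List.reverseRecOn with
  | nil => intro n m hn hm; rw [isPos_nil hn, isPos_nil hm]
  | append_singleton π i ih =>
      intro n m hn hm
      obtain ⟨x, hx, hpx, rfl⟩ := isPos_snoc hn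
      obtain ⟨y, hy, hpy, rfl⟩ := isPos_snoc hm
      cases ih hpx hpy
      rfl

theorem isPos_prefix {g : TermGraph S N} {π π' : List ℕ} {m : N}
    (hpre : π' <+: π) (h : g.IsPos π m) : ∃ n, g.IsPos π' n := by
  obtain ⟨ρ, rfl⟩ := hpre
  induction ρ using List.reverseRecOn generalizing m with
  | nil => exact ⟨m, by simpa using h⟩
  | append_singleton ρ i ih =>
      rw [← List.append_assoc] at h
      obtain ⟨x, _, hx, _⟩ := isPos_snoc h
      exact ih hx

theorem isPos_transplant {g : TermGraph S N} {π₁ π₂ : List ℕ} {n : N}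
    (h1 : g.IsPos π₁ n) (h2 : g.IsPos π₂ n) :
    ∀ {ρ : List ℕ} {m : N}, g.IsPos (π₁ ++ ρ) m → g.IsPos (π₂ ++ ρ) m := by
  intro ρ
  induction ρ using List.reverseRecOn with
  | nil =>
      intro m hm
      rw [List.append_nil] at hm ⊢
      rwa [isPos_unique hm h1]
  | append_singleton ρ i ih =>
      intro m hm
      rw [← List.append_assoc] at hm
      obtain ⟨x, hx, hpx, rfl⟩ := isPos_snoc hm
      rw [← List.append_assoc]
      exact (ih hpx).step ⟨i, hx⟩

/-! ### Depth -/

theorem depth_le {g : TermGraph S N} {π : List ℕ} {n : N} (h : g.IsPos π n) :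
    g.depth n ≤ π.length :=
  Nat.sInf_le ⟨π, h, rfl⟩

theorem exists_depth_pos {g : TermGraph S N} {n : N} (h : ∃ π, g.IsPos π n) :
    ∃ π, g.IsPos π n ∧ π.length = g.depth n := by
  obtain ⟨π, hπ⟩ := h
  have : g.depth n ∈ {k : ℕ | ∃ π : List ℕ, g.IsPos π n ∧ π.length = k} :=
    Nat.sInf_mem ⟨π.length, π, hπ, rfl⟩
  exact this

theorem depth_suc_le {g : TermGraph S N} {n : N} (h : ∃ π, g.IsPos π n)
    (i : Fin (S.ar (g.lab n))) : g.depth (g.suc n i) ≤ g.depth n + 1 := by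
  obtain ⟨π, hπ, hl⟩ := exists_depth_pos h
  have := depth_le (hπ.step i)
  simpa [hl] using this

/-! ### Acyclic positions -/

theorem acyclic_prefix {g : TermGraph S N} {π π' : List ℕ}
    (h : g.IsAcyclicPos π) (hpre : π' <+: π) : g.IsAcyclicPos π' :=
  fun π₁ π₂ n h12 h2 => h π₁ π₂ n h12 (h2.trans hpre)

theorem acyclic_of_minimal {g : TermGraph S N} {π : List ℕ} {n : N}
    (h : g.IsPos π n) (hmin : π.length = g.depth n) : g.IsAcyclicPos π := by
  intro π₁ π₂ m h12 h2π hp1 hp2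
  by_contra hne
  obtain ⟨σ, rfl⟩ := h12
  obtain ⟨ρ, rfl⟩ := h2π
  have hπ1ρ : g.IsPos (π₁ ++ ρ) n := isPos_transplant hp2 hp1 h
  have hlen := depth_le hπ1ρ
  have hσ : σ ≠ [] := fun hσ => hne (by simp [hσ])
  have : 0 < σ.length := List.length_pos_iff.mpr hσ
  simp only [List.length_append] at hlen hmin
  omega

theorem exists_acyclic_pos {g : TermGraph S N} {n : N} (h : ∃ π, g.IsPos π n) :
    ∃ π, π ∈ g.nodePosAcy n ∧ π.length = g.depth n := by
  obtain ⟨π, hπ, hl⟩ := exists_depth_pos h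
  exact ⟨π, ⟨hπ, acyclic_of_minimal hπ hl⟩, hl⟩

theorem eq_of_nodePosAcy_eq {g : TermGraph S N} {n m : N}
    (h : g.nodePosAcy n = g.nodePosAcy m) (hn : ∃ π, g.IsPos π n) : n = m := by
  obtain ⟨π, hπ, _⟩ := exists_acyclic_pos hn
  have hm : π ∈ g.nodePosAcy m := h ▸ hπ
  exact isPos_unique hπ.1 hm.1

theorem acyclic_swap {g : TermGraph S N} {π : List ℕ} {j i : ℕ} {m : N}
    (h1 : g.IsPos (π ++ [j]) m) (hacy : g.IsAcyclicPos (π ++ [j]))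
    (h2 : g.IsPos (π ++ [i]) m) : g.IsAcyclicPos (π ++ [i]) := by
  intro π₁ π₂ z pre12 pre2 hz1 hz2
  rcases (List.prefix_concat_iff.mp pre2) with rfl | hpre2
  · -- π₂ = π ++ [i]
    have hzm : z = m := isPos_unique hz2 h2
    rcases (List.prefix_concat_iff.mp pre12) with rfl | hpre1
    · rfl
    · -- π₁ <+: π
      have h1' : g.IsPos (π ++ [j]) z := hzm ▸ h1
      have := hacy π₁ (π ++ [j]) z (hpre1.trans (by simp)) (by rfl) hz1 h1'
      have hlen : π₁.length ≤ π.length := hpre1.length_le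
      simp [this] at hlen
  · exact hacy π₁ π₂ z pre12 (hpre2.trans (by simp)) hz1 hz2

end TermGraph
end TGR
namespace TGR
namespace TermGraph

variable {S : Signature} {N M K : Type}

theorem bot_ar_none : S.bot.ar none = 0 := rfl

theorem ne_none_of_ar_pos {o : Option S.Sym} (h : 0 < S.bot.ar o) : o ≠ none := by
  rintro rfl; exact absurd h (by simp [bot_ar_none])

theorem IsDHom.mono {Δ : Set S.Sym} {g : TermGraph S N} {h : TermGraph S M} {φ : N → M}
    (hφ : IsDHom ∅ g h φ) : IsDHom Δ g h φ where
  root_eq := hφ.root_eq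
  lab_eq n _ := hφ.lab_eq n (by simp)
  suc_eq n _ := hφ.suc_eq n (by simp)

/-- A `⊥`-homomorphism preserves positions. -/
theorem hom_isPos {g : TermGraph S.bot N} {h : TermGraph S.bot M} {φ : N → M}
    (hφ : IsDHom ({none} : Set (Option S.Sym)) g h φ) : ∀ {π : List ℕ} {n : N}, g.IsPos π n → h.IsPos π (φ n) := by
  intro π n hp
  induction hp with
  | root => rw [hφ.root_eq]; exact .root
  | @step π n hpp i ih =>
      have hne : g.lab n ≠ none :=
        ne_none_of_ar_pos i.pos
      have hlab := hφ.lab_eq n (by exact hne)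
      have hi' : (i : ℕ) < S.bot.ar (h.lab (φ n)) := by rw [hlab]; exact i.isLt
      have hsuc := hφ.suc_eq n (by exact hne) i i.isLt hi'
      have hstep := IsPos.step ih ⟨(i : ℕ), hi'⟩
      rwa [← hsuc] at hstep

/-- Tracing back a position of the codomain through a `⊥`-homomorphism. -/
theorem hom_traceback {g : TermGraph S.bot N} {h : TermGraph S.bot M} {φ : N → M}
    (hφ : IsDHom ({none} : Set (Option S.Sym)) g h φ) :
    ∀ {π : List ℕ} {m : M}, h.IsPos π m →
      (∃ n, g.IsPos π n ∧ φ n = m) ∨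
      (∃ (π' : List ℕ) (n : N), π' <+: π ∧ g.IsPos π' n ∧ g.lab n = none) := by
  intro π m hp
  induction hp with
  | root => exact Or.inl ⟨g.root, .root, hφ.root_eq⟩
  | @step π m hpp i ih =>
      rcases ih with ⟨n, hn, rfl⟩ | ⟨π', n, hpre, hn, hnone⟩
      · by_cases hc : g.lab n = none
        · exact Or.inr ⟨π, n, by simp, hn, hc⟩
        · have hlab := hφ.lab_eq n (by exact hc)
          have hi : (i : ℕ) < S.bot.ar (g.lab n) := by rw [← hlab]; exact i.isLt
          have hsuc := hφ.suc_eq n (by exact hc) i hi i.isLt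
          exact Or.inl ⟨g.suc n ⟨(i : ℕ), hi⟩, hn.step ⟨(i : ℕ), hi⟩, hsuc⟩
      · exact Or.inr ⟨π', n, hpre.trans (by simp), hn, hnone⟩

theorem botDepth_le_depth {g : TermGraph S.bot N} {n : N} (h : g.lab n = none) :
    g.botDepth ≤ (g.depth n : ℕ∞) :=
  sInf_le ⟨n, h, rfl⟩

theorem botDepth_le_of_hom {g : TermGraph S.bot N} {h : TermGraph S.bot M} {φ : N → M}
    (hφ : IsDHom ({none} : Set (Option S.Sym)) g h φ) (hh : h.Reachable) : g.botDepth ≤ h.botDepth := by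
  apply le_sInf
  rintro e ⟨m, hm, rfl⟩
  obtain ⟨π, hπ, hlen⟩ := exists_depth_pos (hh m)
  rcases hom_traceback hφ hπ with ⟨n, hn, rfl⟩ | ⟨π', n, hpre, hn, hnone⟩
  · have hnn : g.lab n = none := by
      by_contra hc
      exact hc ((hφ.lab_eq n (by exact hc)).symm.trans hm)
    refine (botDepth_le_depth hnn).trans ?_
    exact_mod_cast hlen ▸ depth_le hn
  · refine (botDepth_le_depth hnone).trans ?_
    have : g.depth n ≤ π.length := le_trans (depth_le hn) hpre.length_le
    exact_mod_cast hlen ▸ this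

theorem Total.botDepth_top {g : TermGraph S.bot N} (h : g.Total) : g.botDepth = ⊤ := by
  have : {d : ℕ∞ | ∃ n : N, g.lab n = none ∧ (g.depth n : ℕ∞) = d} = ∅ := by
    ext d; simp only [Set.mem_setOf_eq, Set.mem_empty_iff_false, iff_false]
    rintro ⟨n, hn, _⟩; exact h n hn
  rw [TermGraph.botDepth, this, sInf_empty]

theorem total_of_hom {g : TermGraph S.bot N} {h : TermGraph S.bot M} {φ : N → M}
    (hφ : IsDHom ({none} : Set (Option S.Sym)) g h φ) (hh : h.Reachable) (hg : g.Total) : h.Total := by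
  intro m
  obtain ⟨π, hπ⟩ := hh m
  rcases hom_traceback hφ hπ with ⟨n, hn, rfl⟩ | ⟨π', n, _, _, hnone⟩
  · rw [hφ.lab_eq n (by exact hg n)]; exact hg n
  · exact absurd hnone (hg n)

theorem isRigidBotHom_id (g : TermGraph S.bot N) : IsRigidBotHom g g id := by
  refine ⟨⟨rfl, fun _ _ => rfl, fun n _ i hi hi' => rfl⟩, fun n _ => rfl⟩

theorem isRigidBotHom_comp {g : TermGraph S.bot N} {h : TermGraph S.bot M}
    {k : TermGraph S.bot K} {φ : N → M} {ψ : M → K}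
    (hφ : IsRigidBotHom g h φ) (hψ : IsRigidBotHom h k ψ) :
    IsRigidBotHom g k (ψ ∘ φ) := by
  have labmid : ∀ n : N, g.lab n ∉ ({none} : Set (Option S.Sym)) →
      h.lab (φ n) ∉ ({none} : Set (Option S.Sym)) := by
    intro n hn
    rw [hφ.1.lab_eq n hn]; exact hn
  refine ⟨⟨?_, ?_, ?_⟩, ?_⟩
  · show ψ (φ g.root) = k.root
    rw [hφ.1.root_eq, hψ.1.root_eq]
  · intro n hn
    show k.lab (ψ (φ n)) = g.lab n
    rw [hψ.1.lab_eq (φ n) (labmid n hn), hφ.1.lab_eq n hn]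
  · intro n hn i hi hi'
    have him : i < S.bot.ar (h.lab (φ n)) := by rw [hφ.1.lab_eq n hn]; exact hi
    show ψ (φ (g.suc n ⟨i, hi⟩)) = k.suc (ψ (φ n)) ⟨i, hi'⟩
    rw [hφ.1.suc_eq n hn i hi him, hψ.1.suc_eq (φ n) (labmid n hn) i him hi']
  · intro n hn
    show g.nodePosAcy n = k.nodePosAcy (ψ (φ n))
    rw [hφ.2 n hn, hψ.2 (φ n) (labmid n hn)]

theorem Iso.refl (g : TermGraph S N) : Iso g g :=
  ⟨id, id, ⟨rfl, fun _ _ => rfl, fun _ _ _ _ _ => rfl⟩,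
    ⟨rfl, fun _ _ => rfl, fun _ _ _ _ _ => rfl⟩, fun _ => rfl, fun _ => rfl⟩

theorem Iso.symm {g : TermGraph S N} {h : TermGraph S M} (hi : Iso g h) : Iso h g := by
  obtain ⟨φ, ψ, h1, h2, h3, h4⟩ := hi
  exact ⟨ψ, φ, h2, h1, h4, h3⟩

theorem isDHom_empty_comp {g : TermGraph S N} {h : TermGraph S M} {k : TermGraph S K}
    {φ : N → M} {ψ : M → K} (hφ : IsDHom ∅ g h φ) (hψ : IsDHom ∅ h k ψ) :
    IsDHom ∅ g k (ψ ∘ φ) := by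
  refine ⟨?_, ?_, ?_⟩
  · show ψ (φ g.root) = k.root
    rw [hφ.root_eq, hψ.root_eq]
  · intro n hn
    show k.lab (ψ (φ n)) = g.lab n
    rw [hψ.lab_eq (φ n) (by simp), hφ.lab_eq n (by simp)]
  · intro n hn i hi hi'
    have him : i < S.ar (h.lab (φ n)) := by rw [hφ.lab_eq n (by simp)]; exact hi
    show ψ (φ (g.suc n ⟨i, hi⟩)) = k.suc (ψ (φ n)) ⟨i, hi'⟩
    rw [hφ.suc_eq n (by simp) i hi him, hψ.suc_eq (φ n) (by simp) i him hi']

theorem Iso.trans {g : TermGraph S N} {h : TermGraph S M} {k : TermGraph S K}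
    (h1 : Iso g h) (h2 : Iso h k) : Iso g k := by
  obtain ⟨φ1, ψ1, d1, e1, l1, r1⟩ := h1
  obtain ⟨φ2, ψ2, d2, e2, l2, r2⟩ := h2
  exact ⟨φ2 ∘ φ1, ψ1 ∘ ψ2, isDHom_empty_comp d1 d2, isDHom_empty_comp e2 e1,
    fun n => by simp [l2, l1], fun m => by simp [r1, r2]⟩

theorem iso_of_bijective {g : TermGraph S N} {h : TermGraph S M} {φ : N → M}
    (hφ : IsDHom ∅ g h φ) (hb : Function.Bijective φ) : Iso g h := by
  obtain ⟨ψ, hψφ, hφψ⟩ : ∃ ψ : M → N, (∀ n, ψ (φ n) = n) ∧ (∀ m, φ (ψ m) = m) :=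
    ⟨(Equiv.ofBijective φ hb).symm, (Equiv.ofBijective φ hb).symm_apply_apply,
      (Equiv.ofBijective φ hb).apply_symm_apply⟩
  refine ⟨φ, ψ, hφ, ⟨?_, ?_, ?_⟩, hψφ, hφψ⟩
  · rw [← hφ.root_eq, hψφ]
  · intro m _
    have := hφ.lab_eq (ψ m) (by simp)
    rw [hφψ m] at this
    exact this.symm
  · intro m _ i hi hi'
    have key : ∀ h2 : i < S.ar (h.lab (φ (ψ m))), h.suc (φ (ψ m)) ⟨i, h2⟩ = h.suc m ⟨i, hi⟩ := by
      rw [hφψ m]; intro h2; rfl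
    have h2 : i < S.ar (h.lab (φ (ψ m))) := by rw [hφψ]; exact hi
    have hs := hφ.suc_eq (ψ m) (by simp) i hi' h2
    rw [← key h2, ← hs, hψφ]

theorem rigid_of_iso_homs {g : TermGraph S.bot N} {h : TermGraph S.bot M} {φ : N → M}
    {ψ : M → N} (hφ : IsDHom ∅ g h φ) (hψ : IsDHom ∅ h g ψ) (hl : ∀ n, ψ (φ n) = n)
    (n : N) : g.nodePosAcy n = h.nodePosAcy (φ n) := by
  ext π
  constructor
  · rintro ⟨hp, hacy⟩
    refine ⟨hom_isPos hφ.mono hp, ?_⟩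
    intro π₁ π₂ y pre12 pre2 hy1 hy2
    exact hacy π₁ π₂ (ψ y) pre12 pre2 (hom_isPos hψ.mono hy1) (hom_isPos hψ.mono hy2)
  · rintro ⟨hp, hacy⟩
    have hq := hom_isPos hψ.mono hp
    rw [hl n] at hq
    refine ⟨hq, ?_⟩
    intro π₁ π₂ y pre12 pre2 hy1 hy2
    exact hacy π₁ π₂ (φ y) pre12 pre2 (hom_isPos hφ.mono hy1) (hom_isPos hφ.mono hy2)

/-- An isomorphism of partial term graphs yields rigid `⊥`-homomorphisms both ways. -/
theorem iso_rigid {g : TermGraph S.bot N} {h : TermGraph S.bot M} (hiso : Iso g h) :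
    ∃ (φ : N → M) (ψ : M → N), IsRigidBotHom g h φ ∧ IsRigidBotHom h g ψ ∧
      (∀ n, ψ (φ n) = n) ∧ (∀ m, φ (ψ m) = m) := by
  obtain ⟨φ, ψ, hφ, hψ, hl, hr⟩ := hiso
  exact ⟨φ, ψ, ⟨hφ.mono, fun n _ => rigid_of_iso_homs hφ hψ hl n⟩,
    ⟨hψ.mono, fun m _ => rigid_of_iso_homs hψ hφ hr m⟩, hl, hr⟩

end TermGraph

namespace CTG

variable {S : Signature}

theorem LeR.refl (g : CTG S.bot) : g.LeR g := ⟨id, TermGraph.isRigidBotHom_id g.tg⟩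

theorem LeR.trans {g h k : CTG S.bot} (h1 : g.LeR h) (h2 : h.LeR k) : g.LeR k := by
  obtain ⟨φ, hφ⟩ := h1; obtain ⟨ψ, hψ⟩ := h2
  exact ⟨ψ ∘ φ, TermGraph.isRigidBotHom_comp hφ hψ⟩

theorem total_of_le {g h : CTG S.bot} (hle : g.LeR h) (hg : g.Total) : h.Total := by
  obtain ⟨φ, hφ⟩ := hle
  exact TermGraph.total_of_hom hφ.1 h.reach hg

theorem botDepth_le_of_le {g h : CTG S.bot} (hle : g.LeR h) : g.botDepth ≤ h.botDepth := by
  obtain ⟨φ, hφ⟩ := hle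
  exact TermGraph.botDepth_le_of_hom hφ.1 h.reach

end CTG
end TGR
namespace TGR
namespace TermGraph

variable {S : Signature} {N M : Type}

/-! ### Fringe and retained node basics -/

theorem isFringe_iff {g : TermGraph S.bot N} {d : ℕ} (hd : d ≠ 0) {p : N × ℕ} :
    g.IsFringe d p ↔ g.Retained d p.1 ∧ ∃ h : p.2 < S.bot.ar (g.lab p.1),
      (¬ g.Retained d (g.suc p.1 ⟨p.2, h⟩) ∨
        (d - 1 ≤ g.depth p.1 ∧ p.1 ∉ g.acyPred (g.suc p.1 ⟨p.2, h⟩))) := by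
  rw [IsFringe, if_neg hd]

theorem acyPred_spec {g : TermGraph S N} {n m : N} (h : m ∈ g.acyPred n) :
    ∃ (π : List ℕ) (i : ℕ) (hi : i < S.ar (g.lab m)),
      g.IsPos π m ∧ n = g.suc m ⟨i, hi⟩ ∧ (π ++ [i]) ∈ g.nodePosAcy n := by
  obtain ⟨π, i, hmem, hm⟩ := h
  obtain ⟨x, hix, hpx, hn⟩ := isPos_snoc hmem.1
  obtain rfl : x = m := isPos_unique hpx hm
  exact ⟨π, i, hix, hm, hn, hmem⟩

theorem Retained.ne_none {g : TermGraph S.bot N} {d : ℕ} {n : N}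
    (hbot : (d : ℕ∞) ≤ g.botDepth) (h : g.Retained d n) : g.lab n ≠ none := by
  induction h with
  | @shallow n hdep =>
      intro he
      have h1 : (d : ℕ∞) ≤ (g.depth n : ℕ∞) := hbot.trans (botDepth_le_depth he)
      have := Nat.cast_le.mp h1
      omega
  | @pred n m _ hm _ =>
      obtain ⟨π, i, hi, _, _, _⟩ := acyPred_spec hm
      exact ne_none_of_ar_pos (Nat.lt_of_le_of_lt (Nat.zero_le i) hi)

theorem depth_ge_of_none {g : TermGraph S.bot N} {d : ℕ} {n : N}
    (hbot : (d : ℕ∞) ≤ g.botDepth) (he : g.lab n = none) : d ≤ g.depth n := by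
  exact_mod_cast hbot.trans (botDepth_le_depth he)

/-! ### The homomorphism from the truncation -/

open Classical in
noncomputable def truncHom (g : TermGraph S.bot N) (d : ℕ) (x : TNode g d) : N :=
  match x with
  | ⟨Sum.inl n, _⟩ => n
  | ⟨Sum.inr p, _⟩ =>
      if h : p.2 < S.bot.ar (g.lab p.1) then g.suc p.1 ⟨p.2, h⟩ else g.root

@[simp] theorem truncHom_inl {g : TermGraph S.bot N} {d : ℕ} {n : N}
    {hn : Sum.elim (g.Retained d) (g.IsFringe d) (Sum.inl n)} :
    truncHom g d ⟨Sum.inl n, hn⟩ = n := rfl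

theorem trunc_root_eq {g : TermGraph S.bot N} {d : ℕ} (hd : d ≠ 0)
    (hr : Sum.elim (g.Retained d) (g.IsFringe d) (Sum.inl g.root)) :
    (g.trunc d).root = ⟨Sum.inl g.root, hr⟩ := by
  show truncRoot g d = _
  rw [truncRoot]; exact dif_neg hd

theorem trunc_lab_inl {g : TermGraph S.bot N} {d : ℕ} {n : N}
    {hn : Sum.elim (g.Retained d) (g.IsFringe d) (Sum.inl n)} :
    (g.trunc d).lab ⟨Sum.inl n, hn⟩ = g.lab n := rfl

theorem trunc_suc_fringe {g : TermGraph S.bot N} {d : ℕ} {n : N}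
    {hn : Sum.elim (g.Retained d) (g.IsFringe d) (Sum.inl n)}
    {i : Fin (S.bot.ar ((g.trunc d).lab ⟨Sum.inl n, hn⟩))}
    (hf : g.IsFringe d (n, (i : ℕ))) :
    (g.trunc d).suc ⟨Sum.inl n, hn⟩ i = ⟨Sum.inr (n, (i : ℕ)), hf⟩ :=
  dif_pos hf

theorem trunc_suc_not_fringe {g : TermGraph S.bot N} {d : ℕ} {n : N}
    {hn : Sum.elim (g.Retained d) (g.IsFringe d) (Sum.inl n)}
    {i : Fin (S.bot.ar ((g.trunc d).lab ⟨Sum.inl n, hn⟩))}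
    (hf : ¬ g.IsFringe d (n, (i : ℕ))) :
    ∃ hs : Sum.elim (g.Retained d) (g.IsFringe d) (Sum.inl (g.suc n ⟨(i : ℕ), i.isLt⟩)),
      (g.trunc d).suc ⟨Sum.inl n, hn⟩ i = ⟨Sum.inl (g.suc n ⟨(i : ℕ), i.isLt⟩), hs⟩ :=
  ⟨_, dif_neg hf⟩

theorem trunc_lab_inr {g : TermGraph S.bot N} {d : ℕ} {p : N × ℕ}
    {hp : Sum.elim (g.Retained d) (g.IsFringe d) (Sum.inr p)} :
    (g.trunc d).lab ⟨Sum.inr p, hp⟩ = none := rfl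

theorem truncHom_isDHom (g : TermGraph S.bot N) {d : ℕ} (hd : d ≠ 0) :
    IsDHom ({none} : Set (Option S.Sym)) (g.trunc d) g (truncHom g d) := by
  refine ⟨?_, ?_, ?_⟩
  · have hr : Sum.elim (g.Retained d) (g.IsFringe d) (Sum.inl g.root) :=
      Retained.shallow (Nat.lt_of_le_of_lt (Nat.sInf_le ⟨[], IsPos.root, rfl⟩)
        (Nat.pos_of_ne_zero hd))
    rw [trunc_root_eq hd hr, truncHom_inl]
  · rintro ⟨x, hx⟩ hlab
    cases x with
    | inl n => rfl
    | inr p => exact absurd rfl hlab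
  · rintro ⟨x, hx⟩ hlab i hi hi'
    cases x with
    | inr p =>
        rw [trunc_lab_inr] at hi
        exact absurd hi (by simp [bot_ar_none])
    | inl n =>
        by_cases hf : g.IsFringe d (n, i)
        · rw [trunc_suc_fringe (i := ⟨i, hi⟩) hf]
          exact dif_pos hi'
        · obtain ⟨hs, heq⟩ := trunc_suc_not_fringe (i := ⟨i, hi⟩) hf
          rw [heq]
          rfl

/-! ### Positions in the truncation -/

theorem exists_arity_pos_of_proper_prefix {g : TermGraph S N} {π π₁ : List ℕ} {m : N}
    (h : g.IsPos π m) (hpre : π₁ <+: π) (hne : π₁ ≠ π) :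
    ∃ x, g.IsPos π₁ x ∧ 0 < S.ar (g.lab x) := by
  obtain ⟨ρ, rfl⟩ := hpre
  cases ρ with
  | nil => simp at hne
  | cons j ρ' =>
      have hpre' : (π₁ ++ [j]) <+: (π₁ ++ j :: ρ') := ⟨ρ', by simp⟩
      obtain ⟨y, hy⟩ := isPos_prefix hpre' h
      obtain ⟨x, hxar, hx, _⟩ := isPos_snoc hy
      exact ⟨x, hx, Nat.lt_of_le_of_lt (Nat.zero_le j) hxar⟩

theorem tnode_inl_of_ar_pos {g : TermGraph S.bot N} {d : ℕ} {x : TNode g d}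
    (h : 0 < S.bot.ar ((g.trunc d).lab x)) :
    ∃ (n : N) (hn : Sum.elim (g.Retained d) (g.IsFringe d) (Sum.inl n)),
      x = ⟨Sum.inl n, hn⟩ := by
  obtain ⟨v, hv⟩ := x
  cases v with
  | inl n => exact ⟨n, hv, rfl⟩
  | inr p => exact absurd h (Nat.lt_irrefl 0)

/-- Acyclic positions of retained nodes survive the truncation. -/
theorem isPos_trunc_of_acyclic {g : TermGraph S.bot N} {d : ℕ} (hd : d ≠ 0) :
    ∀ {π : List ℕ} {n : N} (hn : g.Retained d n), g.IsPos π n → g.IsAcyclicPos π →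
      (g.trunc d).IsPos π ⟨Sum.inl n, hn⟩ := by
  intro π
  induction π using List.reverseRecOn with
  | nil =>
      intro n hn hp hacy
      obtain rfl := isPos_nil hp
      rw [← trunc_root_eq hd hn]
      exact .root
  | append_singleton π i ih =>
      intro n hn hp hacy
      obtain ⟨x, hix, hpx, rfl⟩ := isPos_snoc hp
      have hxpred : x ∈ g.acyPred (g.suc x ⟨i, hix⟩) := ⟨π, i, ⟨hp, hacy⟩, hpx⟩
      have hxret : g.Retained d x := Retained.pred hn hxpred
      have hπacy : g.IsAcyclicPos π := acyclic_prefix hacy ⟨[i], rfl⟩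
      have ihx := ih hxret hpx hπacy
      have hnotf : ¬ g.IsFringe d (x, i) := by
        intro hf
        obtain ⟨-, hlt, hcond⟩ := (isFringe_iff hd).mp hf
        rcases hcond with hnr | ⟨-, hnp⟩
        · exact hnr hn
        · exact hnp hxpred
      have harT : (i : ℕ) < S.bot.ar ((g.trunc d).lab ⟨Sum.inl x, hxret⟩) := hix
      have hstep := IsPos.step ihx ⟨i, harT⟩
      obtain ⟨hs, heq⟩ := trunc_suc_not_fringe (i := ⟨i, harT⟩) hnotf
      rwa [heq] at hstep

/-- Rigidity of the truncation homomorphism. -/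
theorem trunc_nodePosAcy {g : TermGraph S.bot N} {d : ℕ} (hd : d ≠ 0)
    {n : N} (hn : g.Retained d n) :
    (g.trunc d).nodePosAcy ⟨Sum.inl n, hn⟩ = g.nodePosAcy n := by
  ext π
  constructor
  · rintro ⟨hp, hacy⟩
    have hgp : g.IsPos π n := hom_isPos (truncHom_isDHom g hd) hp
    refine ⟨hgp, ?_⟩
    intro π₁ π₂ z pre12 pre2 hz1 hz2
    by_cases he : π₁ = π₂
    · exact he
    have hne2 : π₁ ≠ π := by
      rintro rfl
      exact he ((pre2.eq_of_length (Nat.le_antisymm pre2.length_le pre12.length_le)).symm)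
    obtain ⟨x₁, hx₁⟩ := isPos_prefix (pre12.trans pre2) hp
    obtain ⟨x₂, hx₂⟩ := isPos_prefix pre2 hp
    have e1 : truncHom g d x₁ = z :=
      isPos_unique (hom_isPos (truncHom_isDHom g hd) hx₁) hz1
    have e2 : truncHom g d x₂ = z :=
      isPos_unique (hom_isPos (truncHom_isDHom g hd) hx₂) hz2
    -- x₁ is an inl node
    obtain ⟨y₁, hy₁, hary₁⟩ :=
      exists_arity_pos_of_proper_prefix hp (pre12.trans pre2) hne2
    obtain rfl : y₁ = x₁ := isPos_unique hy₁ hx₁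
    obtain ⟨n₁, hn₁, rfl⟩ := tnode_inl_of_ar_pos hary₁
    by_cases he2 : π₂ = π
    · subst he2
      have hx₂' : x₂ = ⟨Sum.inl n, hn⟩ := isPos_unique hx₂ hp
      subst hx₂'
      simp only [truncHom_inl] at e1 e2
      subst e1; subst e2
      exact hacy π₁ π₂ _ pre12 pre2 hx₁ hx₂
    · obtain ⟨y₂, hy₂, hary₂⟩ := exists_arity_pos_of_proper_prefix hp pre2 he2
      obtain rfl : y₂ = x₂ := isPos_unique hy₂ hx₂
      obtain ⟨n₂, hn₂, rfl⟩ := tnode_inl_of_ar_pos hary₂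
      simp only [truncHom_inl] at e1 e2
      subst e1; subst e2
      exact hacy π₁ π₂ _ pre12 pre2 hx₁ hx₂
  · rintro ⟨hp, hacy⟩
    refine ⟨isPos_trunc_of_acyclic hd hn hp hacy, ?_⟩
    intro π₁ π₂ y pre12 pre2 hy1 hy2
    exact hacy π₁ π₂ (truncHom g d y) pre12 pre2
      (hom_isPos (truncHom_isDHom g hd) hy1) (hom_isPos (truncHom_isDHom g hd) hy2)

theorem truncHom_isRigid (g : TermGraph S.bot N) {d : ℕ} (hd : d ≠ 0) :
    IsRigidBotHom (g.trunc d) g (truncHom g d) := by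
  refine ⟨truncHom_isDHom g hd, ?_⟩
  rintro ⟨x, hx⟩ hlab
  cases x with
  | inr p => exact absurd rfl hlab
  | inl n => exact trunc_nodePosAcy hd hx

theorem trunc_reachable {g : TermGraph S.bot N} (hg : g.Reachable) {d : ℕ} (hd : d ≠ 0) :
    (g.trunc d).Reachable := by
  have key : ∀ (n : N) (hn : g.Retained d n), ∃ π, (g.trunc d).IsPos π ⟨Sum.inl n, hn⟩ := by
    intro n hn
    obtain ⟨π, hmem, _⟩ := exists_acyclic_pos (hg n)
    exact ⟨π, isPos_trunc_of_acyclic hd hn hmem.1 hmem.2⟩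
  rintro ⟨x, hx⟩
  cases x with
  | inl n => exact key n hx
  | inr p =>
      have hfr : g.IsFringe d p := hx
      obtain ⟨hret, hlt, _⟩ := (isFringe_iff hd).mp hfr
      obtain ⟨π, hπ⟩ := key p.1 hret
      have harT : p.2 < S.bot.ar ((g.trunc d).lab ⟨Sum.inl p.1, hret⟩) := hlt
      have hstep := IsPos.step hπ ⟨p.2, harT⟩
      rw [trunc_suc_fringe (i := ⟨p.2, harT⟩) hfr] at hstep
      exact ⟨π ++ [p.2], hstep⟩

theorem trunc_botDepth {g : TermGraph S.bot N} (htot : g.Total) (hg : g.Reachable)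
    {d : ℕ} (hd : d ≠ 0) : (d : ℕ∞) ≤ (g.trunc d).botDepth := by
  apply le_sInf
  rintro e ⟨⟨x, hx⟩, hlabnone, rfl⟩
  cases x with
  | inl n => exact absurd hlabnone (htot n)
  | inr p =>
      have hlen : ∀ (ρ : List ℕ), (g.trunc d).IsPos ρ ⟨Sum.inr p, hx⟩ → d ≤ ρ.length := by
        intro ρ hρ
        rcases isPos_cases hρ with ⟨rfl, hroot⟩ | ⟨π', y, j, rfl, hπ', hy⟩
        · rw [trunc_root_eq hd (Retained.shallow (Nat.lt_of_le_of_lt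
            (Nat.sInf_le ⟨[], IsPos.root, rfl⟩) (Nat.pos_of_ne_zero hd)))] at hroot
          exact absurd (congrArg Subtype.val hroot) (by simp)
        · obtain ⟨n', hn', rfl⟩ := tnode_inl_of_ar_pos j.pos
          have hgp : g.IsPos π' n' := by
            have := hom_isPos (truncHom_isDHom g hd) hπ'
            simpa using this
          by_cases hf : g.IsFringe d (n', (j : ℕ))
          · obtain ⟨-, hlt, hcond⟩ := (isFringe_iff hd).mp hf
            have hd1 : d - 1 ≤ π'.length := by
              rcases hcond with hnr | ⟨hdep, -⟩
              · have hnd : d ≤ g.depth (g.suc n' ⟨(j : ℕ), hlt⟩) := by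
                  by_contra hc
                  exact hnr (Retained.shallow
                    (show g.depth (g.suc n' ⟨(j : ℕ), hlt⟩) < d by omega))
                have := depth_le (hgp.step ⟨(j : ℕ), hlt⟩)
                simp only [List.length_append, List.length_cons, List.length_nil] at this
                have := hnd.trans this
                omega
              · exact hdep.trans (depth_le hgp)
            simp only [List.length_append, List.length_cons, List.length_nil]
            omega
          · obtain ⟨hs, heq⟩ := trunc_suc_not_fringe (i := j) hf
            rw [heq] at hy
            exact absurd (congrArg Subtype.val hy) (by simp)
      obtain ⟨ρ, hρ, hl⟩ := exists_depth_pos (trunc_reachable hg hd ⟨Sum.inr p, hx⟩)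
      have := hlen ρ hρ
      rw [hl] at this
      exact_mod_cast this

end TermGraph
end TGR
namespace TGR
namespace TermGraph

variable {S : Signature} {N M : Type} {g : TermGraph S.bot N} {h : TermGraph S.bot M}
  {φ : N → M} {d : ℕ}

theorem rigid_inj (hφ : IsRigidBotHom g h φ) (hg : g.Reachable) {x y : N}
    (hx : g.lab x ≠ none) (hy : g.lab y ≠ none) (he : φ x = φ y) : x = y := by
  apply eq_of_nodePosAcy_eq _ (hg x)
  rw [hφ.2 x (by exact hx), hφ.2 y (by exact hy), he]

theorem rigid_depth_eq (hφ : IsRigidBotHom g h φ) (hg : g.Reachable) {n : N}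
    (hn : g.lab n ≠ none) : h.depth (φ n) = g.depth n := by
  have hacy := hφ.2 n (by exact hn)
  obtain ⟨π, hπ, hl⟩ := exists_acyclic_pos (hg n)
  have hπ' : π ∈ h.nodePosAcy (φ n) := hacy ▸ hπ
  have h1 : h.depth (φ n) ≤ g.depth n := hl ▸ depth_le hπ'.1
  obtain ⟨ρ, hρ, hl2⟩ := exists_acyclic_pos ⟨π, hπ'.1⟩
  have hρ' : ρ ∈ g.nodePosAcy n := by rw [hacy]; exact hρ
  exact le_antisymm h1 (hl2 ▸ depth_le hρ'.1)

theorem rigid_acyPred_image (hφ : IsRigidBotHom g h φ) {n m : N} (hn : g.lab n ≠ none)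
    (hm : m ∈ g.acyPred n) : φ m ∈ h.acyPred (φ n) := by
  obtain ⟨π, i, hmem, hπ⟩ := hm
  exact ⟨π, i, by rw [← hφ.2 n (by exact hn)]; exact hmem, hom_isPos hφ.1 hπ⟩

theorem rigid_acyPred_preimage (hφ : IsRigidBotHom g h φ) {n : N} {m' : M}
    (hn : g.lab n ≠ none) (hm : m' ∈ h.acyPred (φ n)) :
    ∃ m : N, φ m = m' ∧ m ∈ g.acyPred n := by
  obtain ⟨π, i, hmem, hπ⟩ := hm
  have hmemg : (π ++ [i]) ∈ g.nodePosAcy n := by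
    rw [hφ.2 n (by exact hn)]; exact hmem
  obtain ⟨x, hix, hpx, -⟩ := isPos_snoc hmemg.1
  exact ⟨x, isPos_unique (hom_isPos hφ.1 hpx) hπ, π, i, hmemg, hpx⟩

theorem retained_image (hbot : (d : ℕ∞) ≤ g.botDepth) (hg : g.Reachable)
    (hφ : IsRigidBotHom g h φ) {n : N} (hn : g.Retained d n) : h.Retained d (φ n) := by
  induction hn with
  | @shallow n hdep =>
      have hne := Retained.ne_none hbot (Retained.shallow hdep)
      exact Retained.shallow (by rw [rigid_depth_eq hφ hg hne]; exact hdep)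
  | @pred n m hnr hm ih =>
      exact Retained.pred ih (rigid_acyPred_image hφ (Retained.ne_none hbot hnr) hm)

theorem retained_preimage (hbot : (d : ℕ∞) ≤ g.botDepth) (hh : h.Reachable)
    (hφ : IsRigidBotHom g h φ) {m : M} (hm : h.Retained d m) :
    ∃ n, g.Retained d n ∧ φ n = m := by
  induction hm with
  | @shallow m hdep =>
      obtain ⟨π, hπ, hl⟩ := exists_depth_pos (hh m)
      rcases hom_traceback hφ.1 hπ with ⟨n, hn, rfl⟩ | ⟨π', n, hpre, hn, hnone⟩
      · exact ⟨n, Retained.shallow (Nat.lt_of_le_of_lt (hl ▸ depth_le hn) hdep), rfl⟩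
      · exfalso
        have h1 : d ≤ g.depth n := depth_ge_of_none hbot hnone
        have h2 : g.depth n ≤ π.length := (depth_le hn).trans hpre.length_le
        omega
  | @pred m m' hmr hm' ih =>
      obtain ⟨n, hnr, rfl⟩ := ih
      obtain ⟨x, hx, hxp⟩ :=
        rigid_acyPred_preimage hφ (Retained.ne_none hbot hnr) hm'
      exact ⟨x, Retained.pred hnr hxp, hx⟩

theorem fringe_image (hd0 : d ≠ 0) (hbot : (d : ℕ∞) ≤ g.botDepth) (hg : g.Reachable)
    (hh : h.Reachable) (hφ : IsRigidBotHom g h φ) {n : N} {i : ℕ}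
    (hf : g.IsFringe d (n, i)) : h.IsFringe d (φ n, i) := by
  obtain ⟨hret, hlt, hcond⟩ := (isFringe_iff hd0).mp hf
  have hnn : g.lab n ≠ none := Retained.ne_none hbot hret
  have hlt' : i < S.bot.ar (h.lab (φ n)) := by
    rw [hφ.1.lab_eq n (by exact hnn)]; exact hlt
  have hsuc : φ (g.suc n ⟨i, hlt⟩) = h.suc (φ n) ⟨i, hlt'⟩ :=
    hφ.1.suc_eq n (by exact hnn) i hlt hlt'
  refine (isFringe_iff hd0).mpr ⟨retained_image hbot hg hφ hret, hlt', ?_⟩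
  by_cases hwret : h.Retained d (h.suc (φ n) ⟨i, hlt'⟩)
  case neg => exact Or.inl hwret
  right
  constructor
  · -- d - 1 ≤ h.depth (φ n)
    rw [rigid_depth_eq hφ hg hnn]
    by_cases hwnone : g.lab (g.suc n ⟨i, hlt⟩) = none
    · have h1 : d ≤ g.depth (g.suc n ⟨i, hlt⟩) := depth_ge_of_none hbot hwnone
      have h2 := depth_suc_le (hg n) ⟨i, hlt⟩
      omega
    · rcases hcond with hnr | ⟨hdep, -⟩
      · have h1 : ¬ g.depth (g.suc n ⟨i, hlt⟩) < d := fun hc => hnr (Retained.shallow hc)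
        have h2 := depth_suc_le (hg n) ⟨i, hlt⟩
        omega
      · exact hdep
  · -- φ n ∉ acyPred h (h.suc (φ n) ⟨i, hlt'⟩)
    intro hmem
    rw [← hsuc] at hwret hmem
    obtain ⟨π, j, hjmem, hπ⟩ := hmem
    by_cases hwnone : g.lab (g.suc n ⟨i, hlt⟩) = none
    · -- the image of the ⊥-successor is retained: use rigidity at its retained preimage
      obtain ⟨u, huret, hu⟩ := retained_preimage hbot hh hφ hwret
      have hunn : g.lab u ≠ none := Retained.ne_none hbot huret
      have hjg : (π ++ [j]) ∈ g.nodePosAcy u := by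
        rw [hφ.2 u (by exact hunn), hu]; exact hjmem
      obtain ⟨x, hjx, hpx, husuc⟩ := isPos_snoc hjg.1
      have hxnn : g.lab x ≠ none := ne_none_of_ar_pos (Nat.lt_of_le_of_lt (Nat.zero_le j) hjx)
      have hxn : n = x :=
        (rigid_inj hφ hg hxnn hnn (isPos_unique (hom_isPos hφ.1 hpx) hπ)).symm
      subst hxn
      by_cases hji : j = i
      · subst hji
        exact hunn (husuc ▸ hwnone)
      · have hπi : h.IsPos (π ++ [i]) (φ (g.suc n ⟨i, hlt⟩)) := by
          rw [hsuc]; exact hπ.step ⟨i, hlt'⟩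
        have hacyi : h.IsAcyclicPos (π ++ [i]) := acyclic_swap hjmem.1 hjmem.2 hπi
        have himem : (π ++ [i]) ∈ g.nodePosAcy u := by
          rw [hφ.2 u (by exact hunn), hu]
          exact ⟨hπi, hacyi⟩
        have huw : u = g.suc n ⟨i, hlt⟩ := isPos_unique himem.1 (hpx.step ⟨i, hlt⟩)
        exact hunn (huw ▸ hwnone)
    · -- successor not ⊥: rigidity at it directly
      have hjg : (π ++ [j]) ∈ g.nodePosAcy (g.suc n ⟨i, hlt⟩) := by
        rw [hφ.2 _ (by exact hwnone)]; exact hjmem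
      obtain ⟨x, hjx, hpx, hsucx⟩ := isPos_snoc hjg.1
      have hxnn : g.lab x ≠ none := ne_none_of_ar_pos (Nat.lt_of_le_of_lt (Nat.zero_le j) hjx)
      have hxn : n = x :=
        (rigid_inj hφ hg hxnn hnn (isPos_unique (hom_isPos hφ.1 hpx) hπ)).symm
      subst hxn
      have hmemg : n ∈ g.acyPred (g.suc n ⟨i, hlt⟩) := ⟨π, j, hjg, hpx⟩
      rcases hcond with hnr | ⟨-, hnp⟩
      · obtain ⟨u, huret, hu⟩ := retained_preimage hbot hh hφ hwret
        have hunn : g.lab u ≠ none := Retained.ne_none hbot huret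
        exact hnr (rigid_inj hφ hg hunn hwnone hu ▸ huret)
      · exact hnp hmemg

end TermGraph
end TGR
namespace TGR
namespace TermGraph

variable {S : Signature} {N M : Type} {g : TermGraph S.bot N} {h : TermGraph S.bot M}
  {φ : N → M} {d : ℕ}

theorem fringe_preimage (hd0 : d ≠ 0) (hbot : (d : ℕ∞) ≤ g.botDepth) (hg : g.Reachable)
    (hφ : IsRigidBotHom g h φ) {n : N} {i : ℕ} (hret : g.Retained d n)
    (hf : h.IsFringe d (φ n, i)) : g.IsFringe d (n, i) := by
  obtain ⟨-, hlt', hcond⟩ := (isFringe_iff hd0).mp hf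
  have hnn : g.lab n ≠ none := Retained.ne_none hbot hret
  have hlt : i < S.bot.ar (g.lab n) := by
    rw [← hφ.1.lab_eq n (by exact hnn)]; exact hlt'
  have hsuc : φ (g.suc n ⟨i, hlt⟩) = h.suc (φ n) ⟨i, hlt'⟩ :=
    hφ.1.suc_eq n (by exact hnn) i hlt hlt'
  refine (isFringe_iff hd0).mpr ⟨hret, hlt, ?_⟩
  by_cases hwret : g.Retained d (g.suc n ⟨i, hlt⟩)
  case neg => exact Or.inl hwret
  right
  have hwim : h.Retained d (h.suc (φ n) ⟨i, hlt'⟩) :=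
    hsuc ▸ retained_image hbot hg hφ hwret
  have hwnn : g.lab (g.suc n ⟨i, hlt⟩) ≠ none := Retained.ne_none hbot hwret
  rcases hcond with hnr | ⟨hdep, hnp⟩
  · exact absurd hwim hnr
  constructor
  · rw [← rigid_depth_eq hφ hg hnn]; exact hdep
  · intro hmem
    apply hnp
    obtain ⟨π, j, hjmem, hπ⟩ := hmem
    refine ⟨π, j, ?_, hom_isPos hφ.1 hπ⟩
    rw [← hsuc, ← hφ.2 _ (by exact hwnn)]
    exact hjmem

/-- **Lemma A**: a rigid `⊥`-homomorphism `g → h` with `d ≤ ⊥-depth g` induces an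
isomorphism of the depth-`d` truncations. -/
theorem trunc_iso_of_rigid (hd0 : d ≠ 0) (hbot : (d : ℕ∞) ≤ g.botDepth)
    (hg : g.Reachable) (hh : h.Reachable) (hφ : IsRigidBotHom g h φ) :
    Iso (g.trunc d) (h.trunc d) := by
  classical
  have hfr_pr : ∀ (p : N × ℕ), g.IsFringe d p → h.IsFringe d (φ p.1, p.2) := by
    intro p hp
    exact fringe_image hd0 hbot hg hh hφ (n := p.1) (i := p.2) hp
  let Φ : TNode g d → TNode h d := fun x =>
    ⟨Sum.map φ (fun p => (φ p.1, p.2)) x.1, by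
      obtain ⟨v, hv⟩ := x
      cases v with
      | inl n => exact retained_image hbot hg hφ hv
      | inr p => exact hfr_pr p hv⟩
  have hΦ_inl : ∀ (n : N) (hn : Sum.elim (g.Retained d) (g.IsFringe d) (Sum.inl n)),
      Φ ⟨Sum.inl n, hn⟩ = ⟨Sum.inl (φ n), retained_image hbot hg hφ hn⟩ := fun _ _ => rfl
  have hΦ_inr : ∀ (p : N × ℕ) (hp : Sum.elim (g.Retained d) (g.IsFringe d) (Sum.inr p)),
      Φ ⟨Sum.inr p, hp⟩ = ⟨Sum.inr (φ p.1, p.2), hfr_pr p hp⟩ := fun _ _ => rfl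
  refine iso_of_bijective (φ := Φ) ⟨?_, ?_, ?_⟩ ⟨?_, ?_⟩
  · -- root
    have hrg : Sum.elim (g.Retained d) (g.IsFringe d) (Sum.inl g.root) :=
      Retained.shallow (Nat.lt_of_le_of_lt (Nat.sInf_le ⟨[], IsPos.root, rfl⟩)
        (Nat.pos_of_ne_zero hd0))
    have hrh : Sum.elim (h.Retained d) (h.IsFringe d) (Sum.inl h.root) :=
      Retained.shallow (Nat.lt_of_le_of_lt (Nat.sInf_le ⟨[], IsPos.root, rfl⟩)
        (Nat.pos_of_ne_zero hd0))
    rw [trunc_root_eq hd0 hrg, trunc_root_eq hd0 hrh, hΦ_inl]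
    exact Subtype.ext (by simp [hφ.1.root_eq])
  · -- labels
    rintro ⟨v, hv⟩ -
    cases v with
    | inl n =>
        rw [hΦ_inl, trunc_lab_inl]
        exact hφ.1.lab_eq n (by exact Retained.ne_none hbot hv)
    | inr p => rw [hΦ_inr]; rfl
  · -- successors
    rintro ⟨v, hv⟩ - i hi hi'
    cases v with
    | inr p =>
        rw [trunc_lab_inr] at hi
        exact absurd hi (by simp [bot_ar_none])
    | inl n =>
        have hvr : h.Retained d (φ n) := retained_image hbot hg hφ hv
        show Φ ((g.trunc d).suc ⟨Sum.inl n, hv⟩ ⟨i, hi⟩)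
            = (h.trunc d).suc ⟨Sum.inl (φ n), hvr⟩ ⟨i, hi'⟩
        by_cases hfr : g.IsFringe d (n, i)
        · rw [trunc_suc_fringe (i := ⟨i, hi⟩) hfr, hΦ_inr _ hfr,
            trunc_suc_fringe (i := ⟨i, hi'⟩) (hfr_pr (n, i) hfr)]
        · obtain ⟨hs, heq⟩ := trunc_suc_not_fringe (i := ⟨i, hi⟩) hfr
          rw [heq, hΦ_inl]
          have hfr' : ¬ h.IsFringe d (φ n, i) := fun hc =>
            hfr (fringe_preimage hd0 hbot hg hφ hv hc)
          obtain ⟨hs', heq'⟩ := trunc_suc_not_fringe (i := ⟨i, hi'⟩) hfr'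
          rw [heq']
          refine Subtype.ext ?_
          show Sum.inl (φ (g.suc n ⟨i, hi⟩)) = Sum.inl (h.suc (φ n) ⟨i, hi'⟩)
          have hnn : g.lab n ≠ none := Retained.ne_none hbot hv
          rw [hφ.1.suc_eq n (by exact hnn) i hi hi']
  · -- injective
    rintro ⟨v, hv⟩ ⟨w, hw⟩ he
    have he' := congrArg Subtype.val he
    simp only [Φ] at he'
    cases v with
    | inl n =>
        cases w with
        | inl n' =>
            simp only [Sum.map_inl, Sum.inl.injEq] at he'
            refine Subtype.ext ?_
            have := rigid_inj hφ hg (Retained.ne_none hbot hv) (Retained.ne_none hbot hw) he'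
            simp [this]
        | inr q => simp only [Sum.map_inl, Sum.map_inr] at he'; exact absurd he' (by simp)
    | inr p =>
        cases w with
        | inl n' => simp only [Sum.map_inl, Sum.map_inr] at he'; exact absurd he' (by simp)
        | inr q =>
            simp only [Sum.map_inr, Sum.inr.injEq, Prod.mk.injEq] at he'
            have hp1 : g.Retained d p.1 := ((isFringe_iff hd0).mp hv).1
            have hq1 : g.Retained d q.1 := ((isFringe_iff hd0).mp hw).1
            have e1 : p.1 = q.1 := rigid_inj hφ hg (Retained.ne_none hbot hp1)
              (Retained.ne_none hbot hq1) he'.1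
            refine Subtype.ext ?_
            show Sum.inr p = Sum.inr q
            exact congrArg Sum.inr (Prod.ext e1 he'.2)
  · -- surjective
    rintro ⟨w, hw⟩
    cases w with
    | inl m =>
        obtain ⟨n, hnr, hφn⟩ := retained_preimage hbot hh hφ hw
        exact ⟨⟨Sum.inl n, hnr⟩, Subtype.ext (by simp [Φ, Sum.map_inl, hφn])⟩
    | inr q =>
        have hq1 : h.Retained d q.1 := ((isFringe_iff hd0).mp hw).1
        obtain ⟨n, hnr, hφn⟩ := retained_preimage hbot hh hφ hq1
        have hqf : h.IsFringe d (φ n, q.2) := by rw [hφn]; exact hw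
        have hgf : g.IsFringe d (n, q.2) := fringe_preimage hd0 hbot hg hφ hnr hqf
        refine ⟨⟨Sum.inr (n, q.2), hgf⟩, Subtype.ext ?_⟩
        simp [Φ, Sum.map_inr, hφn]

end TermGraph
end TGR
namespace TGR
namespace TermGraph

variable {S : Signature} {N M : Type}

/-- Transport of a term graph along an equivalence of node sets. -/
def emap (G : TermGraph S N) (e : N ≃ M) : TermGraph S M where
  lab m := G.lab (e.symm m)
  suc m i := e (G.suc (e.symm m) i)
  root := e G.root

theorem emap_isDHom (G : TermGraph S N) (e : N ≃ M) : IsDHom ∅ G (G.emap e) e := by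
  refine ⟨rfl, ?_, ?_⟩
  · intro n _
    show G.lab (e.symm (e n)) = G.lab n
    rw [e.symm_apply_apply]
  · intro n _ i hi hi'
    show e (G.suc n ⟨i, hi⟩) = e (G.suc (e.symm (e n)) ⟨i, hi'⟩)
    have hkey : ∀ (x : N) (hx : x = n) (hix : i < S.ar (G.lab x)),
        G.suc x ⟨i, hix⟩ = G.suc n ⟨i, hi⟩ := by rintro x rfl hix; rfl
    exact congrArg e (hkey _ (e.symm_apply_apply n) hi').symm

theorem emap_isDHom_inv (G : TermGraph S N) (e : N ≃ M) : IsDHom ∅ (G.emap e) G e.symm := by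
  refine ⟨?_, ?_, ?_⟩
  · show e.symm (e G.root) = G.root
    rw [e.symm_apply_apply]
  · intro m _
    rfl
  · intro m _ i hi hi'
    show e.symm (e (G.suc (e.symm m) ⟨i, hi⟩)) = G.suc (e.symm m) ⟨i, hi'⟩
    rw [e.symm_apply_apply]

theorem emap_iso (G : TermGraph S N) (e : N ≃ M) : Iso G (G.emap e) :=
  iso_of_bijective (emap_isDHom G e) e.bijective

/-- Every reachable partial term graph has a canonical representative. -/
theorem exists_canonize (G : TermGraph S.bot N) (hr : G.Reachable) :
    ∃ c : CTG S.bot, Iso G c.tg := by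
  classical
  set nodes : Set (Set (List ℕ)) := {P | ∃ n : N, P = G.nodePos n} with hnodes
  have hinj : Function.Injective (fun n : N => (⟨G.nodePos n, n, rfl⟩ : ↥nodes)) := by
    intro a b hab
    have h1 : G.nodePos a = G.nodePos b := congrArg Subtype.val hab
    obtain ⟨π, hπ⟩ := hr a
    have hπb : G.IsPos π b := by
      have : π ∈ G.nodePos b := h1 ▸ hπ
      exact this
    exact isPos_unique hπ hπb
  have hsurj : Function.Surjective (fun n : N => (⟨G.nodePos n, n, rfl⟩ : ↥nodes)) := by
    rintro ⟨P, n, rfl⟩; exact ⟨n, rfl⟩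
  let e : N ≃ ↥nodes := Equiv.ofBijective _ ⟨hinj, hsurj⟩
  have he : ∀ n, (e n : Set (List ℕ)) = G.nodePos n := fun n => rfl
  have hpos : ∀ n, (G.emap e).nodePos (e n) = G.nodePos n := by
    intro n; ext π
    constructor
    · intro hp
      have := hom_isPos (emap_isDHom_inv G e).mono hp
      rw [e.symm_apply_apply] at this
      exact this
    · intro hp
      exact hom_isPos (emap_isDHom G e).mono hp
  refine ⟨⟨nodes, G.emap e, ?_, ?_⟩, emap_iso G e⟩
  · intro x
    obtain ⟨n, rfl⟩ := e.surjective x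
    obtain ⟨π, hπ⟩ := hr n
    exact ⟨π, hom_isPos (emap_isDHom G e).mono hπ⟩
  · intro x
    obtain ⟨n, rfl⟩ := e.surjective x
    show (e n : Set (List ℕ)) = (G.emap e).nodePos (e n)
    rw [hpos n, he n]

end TermGraph

namespace CTG

variable {S : Signature}

open TermGraph

theorem exists_truncCTG (g : CTG S.bot) (hg : g.Total) {d : ℕ} (hd : d ≠ 0) :
    ∃ t : CTG S.bot, Iso (g.tg.trunc d) t.tg ∧ t.LeR g ∧ (d : ℕ∞) ≤ t.tg.botDepth := by
  obtain ⟨t, hiso⟩ := exists_canonize (g.tg.trunc d) (trunc_reachable g.reach hd)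
  obtain ⟨φ, ψ, hφ, hψ, -, -⟩ := iso_rigid hiso
  refine ⟨t, hiso, ⟨truncHom g.tg d ∘ ψ, isRigidBotHom_comp hψ (truncHom_isRigid g.tg hd)⟩, ?_⟩
  calc (d : ℕ∞) ≤ (g.tg.trunc d).botDepth := trunc_botDepth hg g.reach hd
    _ ≤ t.tg.botDepth := botDepth_le_of_hom hφ.1 t.reach

theorem trunc_iso_mono {g h : CTG S.bot} (hg : g.Total) (hh : h.Total) {m k : ℕ}
    (hk : k ≠ 0) (hkm : k ≤ m) (hiso : Iso (g.tg.trunc m) (h.tg.trunc m)) :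
    Iso (g.tg.trunc k) (h.tg.trunc k) := by
  have hm : m ≠ 0 := by omega
  obtain ⟨G, hGiso, hGle, hGbot⟩ := exists_truncCTG g hg hm
  obtain ⟨H, hHiso, hHle, hHbot⟩ := exists_truncCTG h hh hm
  have hGH : Iso G.tg H.tg := (hGiso.symm.trans hiso).trans hHiso
  have hcast : (k : ℕ∞) ≤ (m : ℕ∞) := Nat.cast_le.mpr hkm
  obtain ⟨φ1, hφ1⟩ := hGle
  have i1 : Iso (G.tg.trunc k) (g.tg.trunc k) :=
    trunc_iso_of_rigid hk (hcast.trans hGbot) G.reach g.reach hφ1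
  obtain ⟨φ2, -, hφ2, -, -, -⟩ := iso_rigid hGH
  have i2 : Iso (G.tg.trunc k) (H.tg.trunc k) :=
    trunc_iso_of_rigid hk (hcast.trans hGbot) G.reach H.reach hφ2
  obtain ⟨φ3, hφ3⟩ := hHle
  have i3 : Iso (H.tg.trunc k) (h.tg.trunc k) :=
    trunc_iso_of_rigid hk (hcast.trans hHbot) H.reach h.reach hφ3
  exact (i1.symm.trans i2).trans i3

theorem rdist_lt_of_trunc_iso {g h : CTG S.bot} {k : ℕ}
    (hiso : Iso (g.tg.trunc k) (h.tg.trunc k)) {ε : ℝ} (hε : (1/2 : ℝ)^k < ε) :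
    rdist g h < ε := by
  have hk_mem : (k : ℕ∞) ∈ {d : ℕ∞ | TruncIso g.tg h.tg d} := by
    refine ⟨fun ht => absurd ht (by simp), fun k' hk' => ?_⟩
    obtain rfl : k = k' := by exact_mod_cast hk'
    exact hiso
  have hle : (k : ℕ∞) ≤ simr g h := le_sSup hk_mem
  rw [rdist]
  split_ifs with hs
  · have : (0:ℝ) < (1/2:ℝ)^k := by positivity
    linarith
  · have hk_le : k ≤ (simr g h).toNat := by
      have h1 := ENat.coe_toNat hs
      rw [← h1] at hle
      exact_mod_cast hle
    calc (1/2 : ℝ) ^ (simr g h).toNat ≤ (1/2 : ℝ)^k :=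
          pow_le_pow_of_le_one (by norm_num) (by norm_num) hk_le
      _ < ε := hε

theorem trunc_iso_of_rdist_lt {g h : CTG S.bot} (hg : g.Total) (hh : h.Total) {k : ℕ}
    (hk : k ≠ 0) (hlt : rdist g h < (1/2 : ℝ)^k) :
    Iso (g.tg.trunc k) (h.tg.trunc k) := by
  have hsup : (k : ℕ∞) < simr g h := by
    by_cases hs : simr g h = ⊤
    · rw [hs]
      exact lt_top_iff_ne_top.mpr (by simp)
    · rw [rdist, if_neg hs] at hlt
      have hlt2 : k < (simr g h).toNat := by
        by_contra hc
        push_neg at hc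
        have := pow_le_pow_of_le_one (a := (1/2:ℝ)) (by norm_num) (by norm_num) hc
        linarith
      have h1 := ENat.coe_toNat hs
      rw [← h1]
      exact_mod_cast hlt2
  obtain ⟨D, hD, hkD⟩ := lt_sSup_iff.mp hsup
  rcases eq_or_ne D ⊤ with rfl | hDne
  · have hiso := hD.1 rfl
    obtain ⟨φ, -, hφ, -, -, -⟩ := iso_rigid hiso
    exact trunc_iso_of_rigid hk (by rw [Total.botDepth_top hg]; exact le_top)
      g.reach h.reach hφ
  · lift D to ℕ using hDne with m hm
    have hiso := hD.2 m rfl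
    exact trunc_iso_mono hg hh hk (by exact_mod_cast hkD.le) hiso

end CTG
end TGR
namespace TGR

open CTG TermGraph

/-- Every non-empty Cauchy sequence (indexed by an ordinal `α`)
of total canonical term graphs converges w.r.t. the rigid distance `d†`, and its
limit equals its limit inferior computed in the complete semilattice of
canonical partial term graphs ordered by `≤⊥r`. -/
theorem cauchy_limit_eq_liminf (S : Signature) (α : Ordinal.{0}) (hα : α ≠ 0)
    (f : Ordinal.{0} → CTG S.bot) (hf : ∀ ι < α, (f ι).Total)
    (hC : CTG.OrdCauchy α f) (L : CTG S.bot) (hL : CTG.IsLiminfR α f L) :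
    L.Total ∧ CTG.OrdTendsto α f L := by
  obtain ⟨inf, hGlb, hLub⟩ := hL
  rcases Ordinal.zero_or_succ_or_isSuccLimit α with rfl | ⟨γ, rfl⟩ | hlim
  · exact absurd rfl hα
  · -- successor case: the tail at `γ` is `{f γ}`, so `f γ ≤ L`; convergence is vacuous
    have hγ : γ < Order.succ γ := Order.lt_succ γ
    have hlb : IsLB {g | ∃ ι, γ ≤ ι ∧ ι < Order.succ γ ∧ g = f ι} (f γ) := by
      rintro g ⟨ι, h1, h2, rfl⟩
      obtain rfl : ι = γ := le_antisymm (Order.lt_succ_iff.mp h2) h1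
      exact LeR.refl _
    have h1 : (f γ).LeR (inf γ) := (hGlb γ hγ).2 (f γ) hlb
    have h2 : (inf γ).LeR L := hLub.1 (inf γ) ⟨γ, hγ, rfl⟩
    refine ⟨total_of_le (h1.trans h2) (hf γ hγ), ?_⟩
    intro ε hε
    exact ⟨γ, hγ, fun ι h1' h2' => absurd (Order.lt_succ_iff.mp h2') (not_le.mpr h1')⟩
  · -- limit case
    have core : ∀ k : ℕ, k ≠ 0 → ∃ β, β < α ∧ (k : ℕ∞) ≤ L.botDepth ∧
        ∀ ι, β ≤ ι → ι < α → Iso ((f ι).tg.trunc k) (L.tg.trunc k) := by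
      intro k hk
      obtain ⟨β₀, hβ₀, hp⟩ := hC ((1/2 : ℝ)^k) (by positivity)
      set β := β₀ + 1 with hβdef
      have hβα : β < α := by
        rw [hβdef, Ordinal.add_one_eq_succ]
        exact hlim.succ_lt hβ₀
      have hβ₀β : β₀ < β := by
        rw [hβdef, Ordinal.add_one_eq_succ]
        exact Order.lt_succ β₀
      have htail : ∀ ι, β ≤ ι → ι < α → Iso ((f β).tg.trunc k) ((f ι).tg.trunc k) := by
        intro ι h1 h2
        rcases eq_or_lt_of_le h1 with rfl | h1'
        · exact Iso.refl _
        · exact trunc_iso_of_rdist_lt (hf β hβα) (hf ι h2) hk (hp β ι hβ₀β h1' h2)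
      obtain ⟨t, htiso, htle, htbot⟩ := exists_truncCTG (f β) (hf β hβα) hk
      have htlb : IsLB {g | ∃ ι, β ≤ ι ∧ ι < α ∧ g = f ι} t := by
        rintro g ⟨ι, h1, h2, rfl⟩
        obtain ⟨φ1, -, hφ1, -, -, -⟩ := iso_rigid (htiso.symm.trans (htail ι h1 h2))
        exact ⟨truncHom (f ι).tg k ∘ φ1, isRigidBotHom_comp hφ1 (truncHom_isRigid _ hk)⟩
      have htinf : t.LeR (inf β) := (hGlb β hβα).2 t htlb
      have hinfbot : (k : ℕ∞) ≤ (inf β).tg.botDepth :=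
        htbot.trans (botDepth_le_of_le htinf)
      have hinfL : (inf β).LeR L := hLub.1 (inf β) ⟨β, hβα, rfl⟩
      have hLbot : (k : ℕ∞) ≤ L.botDepth := hinfbot.trans (botDepth_le_of_le hinfL)
      obtain ⟨φL, hφL⟩ := hinfL
      have hisoL : Iso ((inf β).tg.trunc k) (L.tg.trunc k) :=
        trunc_iso_of_rigid hk hinfbot (inf β).reach L.reach hφL
      refine ⟨β, hβα, hLbot, fun ι h1 h2 => ?_⟩
      obtain ⟨φι, hφι⟩ := (hGlb β hβα).1 (f ι) ⟨ι, h1, h2, rfl⟩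
      have hisoι : Iso ((inf β).tg.trunc k) ((f ι).tg.trunc k) :=
        trunc_iso_of_rigid hk hinfbot (inf β).reach (f ι).reach hφι
      exact hisoι.symm.trans hisoL
    constructor
    · -- totality of the limit inferior
      intro n hn
      have hbotall : ∀ k : ℕ, (k : ℕ∞) ≤ L.botDepth := by
        intro k
        obtain ⟨β, -, hb, -⟩ := core (k + 1) (by omega)
        calc (k : ℕ∞) ≤ ((k + 1 : ℕ) : ℕ∞) := by exact_mod_cast Nat.le_succ k
          _ ≤ _ := hb
      have htop : L.botDepth = ⊤ := by
        by_contra hcon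
        set x := L.botDepth with hx
        lift x to ℕ using hcon with m hm
        have h2 : (m + 1 : ℕ) ≤ m := Nat.cast_le.mp (hbotall (m + 1))
        omega
      have hle := TermGraph.botDepth_le_depth (g := L.tg) hn
      rw [show L.tg.botDepth = L.botDepth from rfl, htop] at hle
      exact absurd (top_le_iff.mp hle) (by simp)
    · -- convergence
      intro ε hε
      obtain ⟨k0, hk0⟩ := exists_pow_lt_of_lt_one hε (by norm_num : (1/2 : ℝ) < 1)
      have hkε : (1/2 : ℝ)^(k0 + 1) < ε :=
        lt_of_le_of_lt (pow_le_pow_of_le_one (by norm_num) (by norm_num) (Nat.le_succ k0)) hk0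
      obtain ⟨β, hβα, -, hiso⟩ := core (k0 + 1) (by omega)
      exact ⟨β, hβα, fun ι h1 h2 => rdist_lt_of_trunc_iso (hiso ι h1.le h2) hkε⟩

end TGR
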